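/- If x ∈ [0,1] is a quadratic irrational (irrational root of a quadratic polynomial with integer coefficients), then the orbit (R^n(x))_{n≥0} of x under the Romik map R is eventually periodic: there exist integers 0 ≤ r < s with R^r(x) = R^s(x). -/

import Mathlib

noncomputable def romik (x : ℝ) : ℝ :=
  if x < 1/3 then x / (1 - 2*x) else if x < 1/2 then 1/x - 2 else 2 - 1/x

private lemma not_irr_int {y : ℝ} {r q : ℤ} (hr : r ≠ 0) (h : (r:ℝ) * y = q) : ¬ Irrational y := by
  intro hy
  exact hy ⟨(q:ℚ)/(r:ℚ), by
    push_cast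
    rw [div_eq_iff (by exact_mod_cast hr)]
    linarith⟩

private lemma not_irr_rat {y : ℝ} {r q : ℚ} (hr : (r:ℝ) ≠ 0) (h : (r:ℝ) * y = q) : ¬ Irrational y := by
  intro hy
  exact hy ⟨q/r, by
    push_cast
    rw [div_eq_iff hr]
    linarith⟩

def romikHyp (D : ℤ) (y : ℝ) (a : ℤ) (w : ℝ) : Prop :=
  y ∈ Set.Icc (0:ℝ) 1 ∧ Irrational y ∧ a ≠ 0 ∧
  (∃ b : ℤ, (b:ℝ) = -(a:ℝ) * (y + w)) ∧ (∃ c : ℤ, (c:ℝ) = (a:ℝ) * y * w) ∧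
  (a:ℝ)^2 * (y - w)^2 = (D:ℝ)

private lemma natAbs_lt_of_cast_abs_lt {a b : ℤ} (h : |(a:ℝ)| < |(b:ℝ)|) : a.natAbs < b.natAbs := by
  have h2 : ((a.natAbs : ℤ) : ℝ) < ((b.natAbs : ℤ) : ℝ) := by
    rwa [← Int.abs_eq_natAbs, ← Int.abs_eq_natAbs, Int.cast_abs, Int.cast_abs]
  exact_mod_cast h2

lemma romik_step {D : ℤ} {y : ℝ} {a : ℤ} {w : ℝ} (h : romikHyp D y a w) :
    ∃ a' w', romikHyp D (romik y) a' w' ∧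
      (w ∈ Set.Icc (0:ℝ) 1 → (w' ∉ Set.Icc (0:ℝ) 1 ∨ a'.natAbs < a.natAbs)) ∧
      (w ∉ Set.Icc (0:ℝ) 1 → w' ∉ Set.Icc (0:ℝ) 1) ∧
      (w ∉ Set.Icc (0:ℝ) 1 → y < 1/2 → w' < 0) := by
  obtain ⟨⟨hy0, hy1⟩, hyirr, ha, ⟨b, hb⟩, ⟨c, hc⟩, hdisc⟩ := h
  have haR : (a:ℝ) ≠ 0 := Int.cast_ne_zero.mpr ha
  have hy0' : 0 < y := lt_of_le_of_ne hy0 (Ne.symm hyirr.ne_zero)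
  have hy1' : y < 1 := lt_of_le_of_ne hy1 hyirr.ne_one
  by_cases h1 : y < 1/3
  · -- branch 1 : y' = y/(1-2y)
    have hyv : romik y = y / (1 - 2*y) := by rw [romik, if_pos h1]
    have hden : (0:ℝ) < 1 - 2*y := by linarith
    have hw2 : w ≠ 1/2 := by
      intro hw
      refine absurd hyirr (not_irr_int (r := 2*a) (q := 2*b + 8*c + a) (by omega) ?_)
      push_cast
      rw [hb, hc, hw]; ring
    have hwden : (1:ℝ) - 2*w ≠ 0 := fun h0 => hw2 (by linarith)
    have ha' : ((a + 2*b + 4*c : ℤ):ℝ) = (a:ℝ) * (1-2*y) * (1-2*w) := by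
      push_cast; rw [hb, hc]; ring
    have ha'0 : (a + 2*b + 4*c : ℤ) ≠ 0 := by
      intro h0
      rw [h0] at ha'
      exact mul_ne_zero (mul_ne_zero haR (ne_of_gt hden)) hwden (by exact_mod_cast ha'.symm)
    have hy'0 : 0 ≤ y / (1 - 2*y) := div_nonneg hy0 hden.le
    have hy'1 : y / (1 - 2*y) ≤ 1 := by
      rw [div_le_one hden]; linarith
    have hirr' : Irrational (romik y) := by
      rw [hyv]
      intro hmem
      obtain ⟨q, hq⟩ := hmem
      rw [eq_div_iff (ne_of_gt hden)] at hq
      have hqe : (q:ℝ) * (1 - 2*y) = y := hq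
      have hrne : ((1 + 2*q : ℚ):ℝ) ≠ 0 := by
        push_cast
        intro h0
        have : (q:ℝ) = -(1/2) := by linarith
        rw [this] at hqe; linarith
      refine absurd hyirr (not_irr_rat (r := 1 + 2*q) (q := q) hrne ?_)
      push_cast
      linarith [hqe]
    refine ⟨a + 2*b + 4*c, w / (1 - 2*w), ⟨⟨by rw [hyv]; exact hy'0, by rw [hyv]; exact hy'1⟩, hirr', ha'0, ⟨b + 4*c, ?_⟩, ⟨c, ?_⟩, ?_⟩, ?_, ?_, ?_⟩
    · rw [hyv]; push_cast; rw [hb, hc]; field_simp [show (1:ℝ) - y*2 ≠ 0 by linarith, show (1:ℝ) - w*2 ≠ 0 from fun h => hwden (by linarith)]; ring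
    · rw [hyv]; push_cast; rw [hb, hc]; field_simp [show (1:ℝ) - y*2 ≠ 0 by linarith, show (1:ℝ) - w*2 ≠ 0 from fun h => hwden (by linarith)]; ring
    · rw [hyv, ha']
      rw [← hdisc]
      field_simp
      ring
    · rintro ⟨hw0, hw1⟩
      rcases hw2.lt_or_gt with hwl | hwr
      · right
        apply natAbs_lt_of_cast_abs_lt
        rw [ha', abs_mul, abs_mul, abs_of_nonneg hden.le, abs_of_nonneg (by linarith : (0:ℝ) ≤ 1 - 2*w)]
        have hA : 0 < |(a:ℝ)| := abs_pos.mpr haR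
        have ht : (1-2*y)*(1-2*w) < 1 := by
          have := mul_le_of_le_one_right hden.le (show 1-2*w ≤ 1 by linarith)
          linarith
        calc |(a:ℝ)| * (1-2*y) * (1-2*w) = |(a:ℝ)| * ((1-2*y)*(1-2*w)) := by ring
          _ < |(a:ℝ)| * 1 := mul_lt_mul_of_pos_left ht hA
          _ = |(a:ℝ)| := mul_one _
      · left
        have : w / (1 - 2*w) < 0 := div_neg_of_pos_of_neg (by linarith) (by linarith)
        simp only [Set.mem_Icc, not_and_or, not_le]
        left; linarith
    · intro hw
      simp only [Set.mem_Icc, not_and_or, not_le] at hw ⊢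
      have : w / (1 - 2*w) < 0 := by
        rcases hw with hw | hw
        · exact div_neg_of_neg_of_pos hw (by linarith)
        · exact div_neg_of_pos_of_neg (by linarith) (by linarith)
      left; exact this
    · intro hw _
      simp only [Set.mem_Icc, not_and_or, not_le] at hw
      rcases hw with hw | hw
      · exact div_neg_of_neg_of_pos hw (by linarith)
      · exact div_neg_of_pos_of_neg (by linarith) (by linarith)
  · have h1' : (1:ℝ)/3 ≤ y := le_of_not_gt h1
    -- w ≠ 0 in branches 2 and 3
    have hw0 : w ≠ 0 := by
      intro hw
      refine absurd hyirr (not_irr_int (r := a) (q := -b) ha ?_)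
      push_cast
      rw [hb, hw]; ring
    have hc0 : c ≠ 0 := by
      intro h0
      rw [h0] at hc
      have hcc : (a:ℝ) * y * w ≠ 0 := mul_ne_zero (mul_ne_zero haR (ne_of_gt hy0')) hw0
      exact hcc (by exact_mod_cast hc.symm)
    have hcR : ((c:ℤ):ℝ) = (a:ℝ) * y * w := hc
    have habs : ∀ hww : 0 ≤ w, w ≤ 1 → |(c:ℝ)| < |(a:ℝ)| := by
      intro hww hw1
      have hwpos : 0 < w := lt_of_le_of_ne hww (Ne.symm hw0)
      have hA : 0 < |(a:ℝ)| := abs_pos.mpr haR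
      rw [hc, abs_mul, abs_mul, abs_of_pos hy0', abs_of_pos hwpos]
      have ht : y * w < 1 := by nlinarith
      calc |(a:ℝ)| * y * w = |(a:ℝ)| * (y * w) := by ring
        _ < |(a:ℝ)| * 1 := mul_lt_mul_of_pos_left ht hA
        _ = |(a:ℝ)| := mul_one _
    by_cases h2 : y < 1/2
    · -- branch 2 : y' = 1/y - 2
      have hyv : romik y = 1/y - 2 := by rw [romik, if_neg h1, if_pos h2]
      have hy'0 : 0 ≤ 1/y - 2 := by
        rw [sub_nonneg, le_div_iff₀ hy0']; linarith
      have hy'1 : 1/y - 2 ≤ 1 := by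
        rw [sub_le_iff_le_add, div_le_iff₀ hy0']; linarith
      have hirr' : Irrational (romik y) := by
        rw [hyv]
        intro hmem
        obtain ⟨q, hq⟩ := hmem
        have hq0 : (0:ℝ) ≤ (q:ℝ) := hq ▸ hy'0
        have hrne : ((q + 2 : ℚ):ℝ) ≠ 0 := by push_cast; linarith
        refine absurd hyirr (not_irr_rat (r := q + 2) (q := 1) hrne ?_)
        push_cast
        have : ((q:ℝ) + 2) * y = (1/y) * y := by rw [hq]; ring
        rw [one_div, inv_mul_cancel₀ (ne_of_gt hy0')] at this
        linarith [this]
      refine ⟨c, 1/w - 2, ⟨⟨by rw [hyv]; exact hy'0, by rw [hyv]; exact hy'1⟩, hirr', hc0, ⟨b + 4*c, ?_⟩, ⟨a + 2*b + 4*c, ?_⟩, ?_⟩, ?_, ?_, ?_⟩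
      · rw [hyv]; push_cast; rw [hb, hc]; field_simp; ring
      · rw [hyv]; push_cast; rw [hb, hc]; field_simp; ring
      · rw [hyv, hcR, ← hdisc]; field_simp; ring
      · rintro ⟨hww, hw1⟩
        right
        exact natAbs_lt_of_cast_abs_lt (habs hww hw1)
      · intro hw
        simp only [Set.mem_Icc, not_and_or, not_le] at hw ⊢
        left
        rcases hw with hw | hw
        · have : 1/w < 0 := by exact div_neg_of_pos_of_neg one_pos hw
          linarith
        · have : 1/w < 1 := by rw [div_lt_one (by linarith)]; linarith
          linarith
      · intro hw _
        simp only [Set.mem_Icc, not_and_or, not_le] at hw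
        rcases hw with hw | hw
        · have : 1/w < 0 := div_neg_of_pos_of_neg one_pos hw
          linarith
        · have : 1/w < 1 := by rw [div_lt_one (by linarith)]; linarith
          linarith
    · -- branch 3 : y' = 2 - 1/y
      have h2' : (1:ℝ)/2 ≤ y := le_of_not_gt h2
      have hyv : romik y = 2 - 1/y := by rw [romik, if_neg h1, if_neg h2]
      have hy'0 : 0 ≤ 2 - 1/y := by
        rw [sub_nonneg, div_le_iff₀ hy0']; linarith
      have hy'1 : 2 - 1/y ≤ 1 := by
        have : (1:ℝ) ≤ 1/y := by rw [le_div_iff₀ hy0']; linarith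
        linarith
      have hirr' : Irrational (romik y) := by
        rw [hyv]
        intro hmem
        obtain ⟨q, hq⟩ := hmem
        have hq1 : (q:ℝ) ≤ 1 := hq ▸ hy'1
        have hrne : ((2 - q : ℚ):ℝ) ≠ 0 := by push_cast; linarith
        refine absurd hyirr (not_irr_rat (r := 2 - q) (q := 1) hrne ?_)
        push_cast
        have : (2 - (q:ℝ)) * y = (1/y) * y := by rw [hq]; ring
        rw [one_div, inv_mul_cancel₀ (ne_of_gt hy0')] at this
        linarith [this]
      refine ⟨c, 2 - 1/w, ⟨⟨by rw [hyv]; exact hy'0, by rw [hyv]; exact hy'1⟩, hirr', hc0, ⟨-b - 4*c, ?_⟩, ⟨a + 2*b + 4*c, ?_⟩, ?_⟩, ?_, ?_, ?_⟩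
      · rw [hyv]; push_cast; rw [hb, hc]; field_simp; ring
      · rw [hyv]; push_cast; rw [hb, hc]; field_simp; ring
      · rw [hyv, hcR, ← hdisc]; field_simp; ring
      · rintro ⟨hww, hw1⟩
        right
        exact natAbs_lt_of_cast_abs_lt (habs hww hw1)
      · intro hw
        simp only [Set.mem_Icc, not_and_or, not_le] at hw ⊢
        right
        rcases hw with hw | hw
        · have : 1/w < 0 := div_neg_of_pos_of_neg one_pos hw
          linarith
        · have : 1/w < 1 := by rw [div_lt_one (by linarith)]; linarith
          linarith
      · intro _ hlt
        exact absurd hlt h2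

lemma romik_bound {D : ℤ} {y : ℝ} {a : ℤ} {w : ℝ} (h : romikHyp D y a w) (hw : w < 0) :
    ∃ a' b c : ℤ, a' ≠ 0 ∧ a'^2 ≤ D^2 ∧ b^2 ≤ D ∧ c^2 ≤ D ∧
      (a':ℝ)*y^2 + (b:ℝ)*y + (c:ℝ) = 0 := by
  obtain ⟨⟨hy0, hy1⟩, hyirr, ha, ⟨b, hb⟩, ⟨c, hc⟩, hdisc⟩ := h
  have haR : (a:ℝ) ≠ 0 := Int.cast_ne_zero.mpr ha
  have hy0' : 0 < y := lt_of_le_of_ne hy0 (Ne.symm hyirr.ne_zero)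
  have hwy : w * y ≤ 0 := mul_nonpos_of_nonpos_of_nonneg hw.le hy0
  have hwy1 : w * 1 ≤ w * y := by nlinarith
  have hbD : (b:ℝ)^2 ≤ (D:ℝ) := by
    rw [hb]
    nlinarith [hdisc, mul_nonneg (mul_nonneg (sq_nonneg (a:ℝ)) hy0) (neg_nonneg.mpr hw.le)]
  have hf1 : (0:ℝ) ≤ (y - w) + y*w := by nlinarith
  have hf2 : (0:ℝ) ≤ (y - w) - y*w := by nlinarith
  have hcD : (c:ℝ)^2 ≤ (D:ℝ) := by
    rw [hc]
    nlinarith [hdisc, mul_nonneg (mul_nonneg (sq_nonneg (a:ℝ)) hf1) hf2]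
  have hbDz : b^2 ≤ D := by exact_mod_cast (by push_cast; exact hbD : ((b^2 : ℤ):ℝ) ≤ (D:ℝ))
  have hcDz : c^2 ≤ D := by exact_mod_cast (by push_cast; exact hcD : ((c^2 : ℤ):ℝ) ≤ (D:ℝ))
  have hZ : b^2 - 4*a*c = D := by
    have : ((b^2 - 4*a*c : ℤ):ℝ) = (D:ℝ) := by
      push_cast; rw [hb, hc]; linear_combination hdisc
    exact_mod_cast this
  have hc0 : c ≠ 0 := by
    intro h0
    rw [h0] at hc
    exact (mul_ne_zero (mul_ne_zero haR (ne_of_gt hy0')) (ne_of_lt hw)) (by exact_mod_cast hc.symm)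
  have haD : |a| ≤ D := by
    have h4c : (1:ℤ) ≤ |4*c| := Int.one_le_abs (by omega)
    have e1 : 4*a*c = b^2 - D := by linarith [hZ]
    have e2 : |4*a*c| = D - b^2 := by
      rw [e1, abs_of_nonpos (by nlinarith [sq_nonneg b] : b^2 - D ≤ 0)]; ring
    calc |a| = |a| * 1 := (mul_one _).symm
      _ ≤ |a| * |4*c| := mul_le_mul_of_nonneg_left h4c (abs_nonneg a)
      _ = |a * (4*c)| := (abs_mul a (4*c)).symm
      _ = |4*a*c| := by ring_nf
      _ = D - b^2 := e2
      _ ≤ D := by nlinarith [sq_nonneg b]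
  refine ⟨a, b, c, ha, ?_, hbDz, hcDz, by rw [hb, hc]; ring⟩
  calc a^2 = |a|^2 := (sq_abs a).symm
    _ ≤ D^2 := pow_le_pow_left₀ (abs_nonneg a) haD 2

lemma romik_F_finite (D : ℤ) :
    {y : ℝ | ∃ a b c : ℤ, a ≠ 0 ∧ a^2 ≤ D^2 ∧ b^2 ≤ D ∧ c^2 ≤ D ∧
      (a:ℝ)*y^2 + (b:ℝ)*y + (c:ℝ) = 0}.Finite := by
  set M : ℤ := D^2 + D with hM
  have key : ∀ t k : ℤ, t^2 ≤ k → |t| ≤ k := by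
    intro t k hk
    rcases eq_or_ne t 0 with rfl | h0
    · simpa using le_trans (by norm_num) hk
    · nlinarith [Int.one_le_abs h0, sq_abs t]
  have h1 : (Set.Icc (-M) M : Set ℤ).Finite := Set.finite_Icc _ _
  have hS : ((((Set.Icc (-M) M) ×ˢ ((Set.Icc (-M) M) ×ˢ (Set.Icc (-M) M))) ×ˢ
      (Set.univ : Set Bool))).Finite := (h1.prod (h1.prod h1)).prod Set.finite_univ
  set g : (ℤ × ℤ × ℤ) × Bool → ℝ := fun p =>
    ((-(p.1.2.1:ℝ)) + (if p.2 then (1:ℝ) else -1) *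
      Real.sqrt ((p.1.2.1:ℝ)^2 - 4*(p.1.1:ℝ)*(p.1.2.2:ℝ))) / (2*(p.1.1:ℝ)) with hg
  apply Set.Finite.subset (hS.image g)
  rintro y ⟨a, b, c, ha, haD, hbD, hcD, hroot⟩
  have haR : (a:ℝ) ≠ 0 := Int.cast_ne_zero.mpr ha
  have hDnn : 0 ≤ D := le_trans (sq_nonneg b) hbD
  have hmem : ∀ e : Bool, ((a, b, c), e) ∈
      (((Set.Icc (-M) M) ×ˢ ((Set.Icc (-M) M) ×ˢ (Set.Icc (-M) M))) ×ˢ (Set.univ : Set Bool)) := by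
    intro e
    refine ⟨⟨?_, ?_, ?_⟩, trivial⟩
    · exact Set.mem_Icc.mpr (abs_le.mp (le_trans (key _ _ haD) (by nlinarith)))
    · exact Set.mem_Icc.mpr (abs_le.mp (le_trans (key _ _ hbD) (by nlinarith [sq_nonneg D])))
    · exact Set.mem_Icc.mpr (abs_le.mp (le_trans (key _ _ hcD) (by nlinarith [sq_nonneg D])))
  have hsq : (2*(a:ℝ)*y + b)^2 = ((b:ℝ)^2 - 4*(a:ℝ)*(c:ℝ)) := by
    linear_combination 4*(a:ℝ)*hroot
  have hs : Real.sqrt ((b:ℝ)^2 - 4*(a:ℝ)*(c:ℝ)) = |2*(a:ℝ)*y + b| := by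
    rw [← hsq, Real.sqrt_sq_eq_abs]
  rcases abs_cases (2*(a:ℝ)*y + b) with ⟨he, _⟩ | ⟨he, _⟩
  · refine ⟨((a,b,c), true), hmem true, ?_⟩
    simp only [hg]
    norm_num
    rw [hs, he]
    field_simp
    ring
  · refine ⟨((a,b,c), false), hmem false, ?_⟩
    simp only [hg]
    norm_num
    rw [hs, he]
    field_simp
    ring

theorem romik_quadratic_irrational_eventually_periodic (x : ℝ)
    (hx : x ∈ Set.Icc (0 : ℝ) 1) (hirr : Irrational x)
    (hquad : ∃ a b c : ℤ, a ≠ 0 ∧ (a : ℝ) * x ^ 2 + (b : ℝ) * x + (c : ℝ) = 0) :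
    ∃ r s : ℕ, r < s ∧ romik^[r] x = romik^[s] x := by
  obtain ⟨A, B, C, hA, hroot⟩ := hquad
  have hAR : (A:ℝ) ≠ 0 := Int.cast_ne_zero.mpr hA
  set D : ℤ := B^2 - 4*A*C with hDdef
  set v : ℝ := -(B:ℝ)/A - x with hv
  set Y : ℕ → ℝ := fun n => romik^[n] x with hYdef
  have hYsucc : ∀ n, Y (n+1) = romik (Y n) := fun n => Function.iterate_succ_apply' romik n x
  have hY0 : Y 0 = x := rfl
  have hAv : (A:ℝ) * (x - v) = 2*A*x + B := by
    rw [hv]; field_simp; ring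
  have hdisc0 : (A:ℝ)^2 * (x - v)^2 = (D:ℝ) := by
    have : (A:ℝ)^2 * (x - v)^2 = ((A:ℝ) * (x - v))^2 := by ring
    rw [this, hAv, hDdef]
    push_cast
    linear_combination 4*(A:ℝ)*hroot
  have hxv : x ≠ v := by
    intro h
    refine absurd hirr (not_irr_int (r := 2*A) (q := -B) (by omega) ?_)
    have : (A:ℝ) * (x - v) = 0 := by rw [h]; ring
    rw [hAv] at this
    push_cast
    linarith
  have hyp0 : romikHyp D x A v := by
    refine ⟨hx, hirr, hA, ⟨B, ?_⟩, ⟨C, ?_⟩, hdisc0⟩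
    · rw [hv]; field_simp; ring
    · have e : (A:ℝ)*x*v = -(B:ℝ)*x - A*x^2 := by rw [hv]; field_simp
      rw [e]; linarith [hroot]
  -- descent: eventually the conjugate leaves [0,1]
  have descent : ∀ k (n : ℕ) (a : ℤ) (w : ℝ), romikHyp D (Y n) a w → a.natAbs ≤ k →
      ∃ N a' w', romikHyp D (Y N) a' w' ∧ w' ∉ Set.Icc (0:ℝ) 1 := by
    intro k
    induction k with
    | zero =>
      intro n a w hyp hk
      exact absurd (Int.natAbs_eq_zero.mp (Nat.le_zero.mp hk)) hyp.2.2.1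
    | succ k ih =>
      intro n a w hyp hk
      by_cases hw : w ∈ Set.Icc (0:ℝ) 1
      · obtain ⟨a', w', hyp', hside, _, _⟩ := romik_step hyp
        rw [← hYsucc n] at hyp'
        rcases hside hw with hout | hlt
        · exact ⟨n+1, a', w', hyp', hout⟩
        · exact ih (n+1) a' w' hyp' (by omega)
      · exact ⟨n, a, w, hyp, hw⟩
  obtain ⟨N, a₀, w₀, hypN, houtN⟩ :=
    descent A.natAbs 0 A v (by rw [hY0]; exact hyp0) le_rfl
  -- the conjugate stays outside [0,1]
  have stay : ∀ j, ∃ a w, romikHyp D (Y (N+j)) a w ∧ w ∉ Set.Icc (0:ℝ) 1 := by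
    intro j
    induction j with
    | zero => exact ⟨a₀, w₀, hypN, houtN⟩
    | succ j ih =>
      obtain ⟨a, w, hyp, hout⟩ := ih
      obtain ⟨a', w', hyp', _, hstay, _⟩ := romik_step hyp
      rw [← hYsucc] at hyp'
      exact ⟨a', w', hyp', hstay hout⟩
  -- basic facts along the orbit (for indices ≥ N)
  have hYfacts : ∀ n, N ≤ n → Y n ∈ Set.Icc (0:ℝ) 1 ∧ Irrational (Y n) := by
    intro n hn
    obtain ⟨a, w, hyp, -⟩ := stay (n - N)
    rw [show N + (n - N) = n by omega] at hyp
    exact ⟨hyp.1, hyp.2.1⟩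
  -- the orbit drops below 1/2 infinitely often
  have small : ∀ m, ∃ n, m ≤ n ∧ N ≤ n ∧ Y n < 1/2 := by
    intro m
    by_contra hcon
    push_neg at hcon
    set M := max m N with hMdef
    have hbig : ∀ i, 1/2 ≤ Y (M + i) := by
      intro i
      exact hcon (M + i) (le_trans (le_max_left _ _) (Nat.le_add_right _ _))
        (le_trans (le_max_right _ _) (Nat.le_add_right _ _))
    have hfacts : ∀ i, Y (M+i) < 1 ∧ 0 < Y (M+i) := by
      intro i
      obtain ⟨hmem, hirr'⟩ := hYfacts (M+i) (le_trans (le_max_right _ _) (Nat.le_add_right _ _))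
      exact ⟨lt_of_le_of_ne hmem.2 hirr'.ne_one, lt_of_lt_of_le (by norm_num) (hbig i)⟩
    have hrec : ∀ i, 1/(1 - Y (M+i+1)) = 1/(1 - Y (M+i)) - 1 := by
      intro i
      obtain ⟨hlt1, hpos⟩ := hfacts i
      have h05 := hbig i
      have hstep : Y (M+i+1) = 2 - 1/(Y (M+i)) := by
        rw [show M+i+1 = (M+i)+1 from rfl, hYsucc, romik,
          if_neg (by push_neg; linarith), if_neg (by push_neg; linarith)]
      have hz0 : Y (M+i) ≠ 0 := ne_of_gt hpos
      have hz1 : (1:ℝ) - Y (M+i) ≠ 0 := by intro h0; linarith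
      have e : (1:ℝ) - (2 - 1/(Y (M+i))) = (1 - Y (M+i))/(Y (M+i)) := by
        field_simp; ring
      rw [hstep, e, one_div_div, eq_sub_iff_add_eq]
      field_simp
      ring
    have htel : ∀ i, 1/(1 - Y (M+i)) = 1/(1 - Y M) - i := by
      intro i
      induction i with
      | zero => simp
      | succ i ih =>
        rw [show M + (i+1) = M+i+1 from rfl, hrec i, ih]
        push_cast
        ring
    obtain ⟨i, hi⟩ := exists_nat_gt (1/(1 - Y M))
    have hposi : 0 < 1/(1 - Y (M+i)) := one_div_pos.mpr (by linarith [(hfacts i).1])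
    rw [htel i] at hposi
    linarith
  -- infinitely often the conjugate is negative
  set F : Set ℝ := {y | ∃ a b c : ℤ, a ≠ 0 ∧ a^2 ≤ D^2 ∧ b^2 ≤ D ∧ c^2 ≤ D ∧
      (a:ℝ)*y^2 + (b:ℝ)*y + (c:ℝ) = 0} with hF
  have negconj : ∀ m, ∃ n, m ≤ n ∧ Y n ∈ F := by
    intro m
    obtain ⟨n, hmn, hNn, hsmall⟩ := small m
    obtain ⟨a, w, hyp, hout⟩ := stay (n - N)
    rw [show N + (n - N) = n by omega] at hyp
    obtain ⟨a', w', hyp', _, _, hneg⟩ := romik_step hyp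
    rw [← hYsucc] at hyp'
    obtain ⟨a'', b, c, h1, h2, h3, h4, h5⟩ := romik_bound hyp' (hneg hout hsmall)
    exact ⟨n+1, by omega, ⟨a'', b, c, h1, h2, h3, h4, h5⟩⟩
  have hTinf : {n : ℕ | Y n ∈ F}.Infinite := by
    apply Set.infinite_of_not_bddAbove
    rintro ⟨m, hm⟩
    obtain ⟨n, hmn, hnF⟩ := negconj (m+1)
    exact absurd (hm hnF) (by omega)
  obtain ⟨r, hrT, s, hsT, hne, heq⟩ :=
    Set.Infinite.exists_ne_map_eq_of_mapsTo (f := Y) (t := F) hTinf (fun n hn => hn)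
      (by rw [hF]; exact romik_F_finite D)
  rcases hne.lt_or_gt with hlt | hlt
  · exact ⟨r, s, hlt, heq⟩
  · exact ⟨s, r, hlt, heq.symm⟩
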